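/- Let X be a compact Hausdorff R₂-space. Let p be a nonprincipal ultrafilter on ℕ which is a weak P-point of the subspace ω* of nonprincipal ultrafilters on ℕ, and let q be a nonprincipal ultrafilter on ℕ. Suppose x ∈ X, (d_m) is an injective sequence in X whose range is a discrete subspace, (e_n) is any sequence in X, x is the p-limit of (d_m) and also the q-limit of (e_n), and {n : e_n = x} ∉ q. Then p ≤_RK q. -/

import Mathlib

open Filter Topology Set

/-- The set of nonprincipal ultrafilters on `ℕ` (the Stone–Čech remainder `ω*`). -/
def omegaStar : Set (Ultrafilter ℕ) := {u : Ultrafilter ℕ | ∀ n : ℕ, u ≠ pure n}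

/-- `X` is an R₂-space: any two separated countable subsets of `X`, at least one of which
is discrete, have disjoint closures. -/
def IsR2Space (X : Type*) [TopologicalSpace X] : Prop :=
  ∀ A B : Set X, A.Countable → B.Countable → DiscreteTopology ↥A →
    closure A ∩ B = ∅ → A ∩ closure B = ∅ → closure A ∩ closure B = ∅

section Aux

variable {X : Type*} [TopologicalSpace X] {d : ℕ → X}

/-- Each point of a discrete range is isolated by an open set of the ambient space. -/
lemma aux_isolated (hd_disc : DiscreteTopology ↥(Set.range d)) (m : ℕ) :
    ∃ U : Set X, IsOpen U ∧ d m ∈ U ∧ U ∩ Set.range d ⊆ {d m} := by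
  have h1 : IsOpen ({(⟨d m, Set.mem_range_self m⟩ : ↥(Set.range d))} :
      Set ↥(Set.range d)) := isOpen_discrete _
  rw [isOpen_induced_iff] at h1
  obtain ⟨U, hUo, hUeq⟩ := h1
  refine ⟨U, hUo, ?_, ?_⟩
  · have : (⟨d m, Set.mem_range_self m⟩ : ↥(Set.range d)) ∈ Subtype.val ⁻¹' U := by
      rw [hUeq]; rfl
    exact this
  · rintro y ⟨hyU, hyR⟩
    have : (⟨y, hyR⟩ : ↥(Set.range d)) ∈ Subtype.val ⁻¹' U := hyU
    rw [hUeq] at this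
    have : (⟨y, hyR⟩ : ↥(Set.range d)) = ⟨d m, Set.mem_range_self m⟩ := this
    exact congrArg Subtype.val this

/-- Images of disjoint index sets under a discrete injective sequence are separated. -/
lemma aux_sep (hd_inj : Function.Injective d) (hd_disc : DiscreteTopology ↥(Set.range d))
    {A B : Set ℕ} (hAB : Disjoint A B) : closure (d '' A) ∩ (d '' B) = ∅ := by
  rw [Set.eq_empty_iff_forall_notMem]
  rintro y ⟨hyc, b, hbB, rfl⟩
  obtain ⟨U, hUo, hdU, hUiso⟩ := aux_isolated hd_disc b
  rw [mem_closure_iff] at hyc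
  obtain ⟨z, hzU, a, haA, rfl⟩ := hyc U hUo hdU
  have : d a = d b := hUiso ⟨hzU, Set.mem_range_self a⟩
  have : a = b := hd_inj this
  subst this
  exact hAB.ne_of_mem haA hbB rfl

/-- In an R₂-space, images of disjoint index sets under a discrete injective sequence have
disjoint closures. -/
lemma aux_disj (hX : IsR2Space X) (hd_inj : Function.Injective d)
    (hd_disc : DiscreteTopology ↥(Set.range d))
    {A B : Set ℕ} (hAB : Disjoint A B) : closure (d '' A) ∩ closure (d '' B) = ∅ := by
  have hdiscA : DiscreteTopology ↥(d '' A) :=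
    DiscreteTopology.of_subset hd_disc (Set.image_subset_range d A)
  refine hX (d '' A) (d '' B) ((A.to_countable).image d) ((B.to_countable).image d) hdiscA
    (aux_sep hd_inj hd_disc hAB) ?_
  have h := aux_sep hd_inj hd_disc hAB.symm
  rw [Set.inter_comm] at h
  exact h

/-- The canonical ultrafilter attached to a point in the closure of a discrete countable set
in an R₂-space. -/
lemma aux_ultra (hX : IsR2Space X) (hd_inj : Function.Injective d)
    (hd_disc : DiscreteTopology ↥(Set.range d)) {y : X} (hy : y ∈ closure (Set.range d)) :
    ∃ u : Ultrafilter ℕ, ∀ A : Set ℕ, A ∈ u ↔ y ∈ closure (d '' A) := by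
  have hdisj : ∀ {A B : Set ℕ}, Disjoint A B →
      y ∈ closure (d '' A) → y ∉ closure (d '' B) := by
    intro A B hAB h1 h2
    have := aux_disj hX hd_inj hd_disc hAB
    rw [Set.eq_empty_iff_forall_notMem] at this
    exact this y ⟨h1, h2⟩
  have hcover : ∀ A : Set ℕ, y ∈ closure (d '' A) ∨ y ∈ closure (d '' Aᶜ) := by
    intro A
    have h1 : Set.range d = d '' A ∪ d '' Aᶜ := by
      rw [← Set.image_union, Set.union_compl_self, Set.image_univ]
    have h2 : y ∈ closure (d '' A ∪ d '' Aᶜ) := by rwa [h1] at hy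
    rw [closure_union] at h2
    exact h2
  refine ⟨Ultrafilter.ofComplNotMemIff
    ⟨{A : Set ℕ | y ∈ closure (d '' A)}, ?_, ?_, ?_⟩ ?_, fun A => Iff.rfl⟩
  · show y ∈ closure (d '' Set.univ)
    rwa [Set.image_univ]
  · intro A B hA hAB
    exact closure_mono (Set.image_mono (f := d) hAB) hA
  · intro A B hA hB
    show y ∈ closure (d '' (A ∩ B))
    by_contra h
    have hsub : d '' A ⊆ d '' (A ∩ B) ∪ d '' (A \ B) := by
      rw [← Set.image_union]
      apply Set.image_mono
      intro a ha
      by_cases hb : a ∈ B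
      · exact Or.inl ⟨ha, hb⟩
      · exact Or.inr ⟨ha, hb⟩
    have : y ∈ closure (d '' (A ∩ B)) ∪ closure (d '' (A \ B)) := by
      rw [← closure_union]
      exact closure_mono hsub hA
    rcases this with h1 | h1
    · exact h h1
    · exact hdisj (Set.disjoint_sdiff_left) h1 hB
  · intro A
    constructor
    · intro h
      rcases hcover A with h1 | h1
      · exact h1
      · exact absurd h1 h
    · intro h h2
      exact hdisj (disjoint_compl_right) h h2

end Aux

/-- Let `X` be a compact Hausdorff R₂-space, `p` a nonprincipal ultrafilter
which is a weak P-point of `ω*`, `q` a nonprincipal ultrafilter, `(d m)` an injective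
discrete sequence in `X`, `(e n)` any sequence in `X`, with `x` both the `p`-limit of
`(d m)` and the `q`-limit of `(e n)`, and `{n : e n = x} ∉ q`. Then `p ≤_RK q`. -/
theorem rudinKeisler_le_of_R2 (X : Type*) [TopologicalSpace X] [CompactSpace X] [T2Space X]
    (hX : IsR2Space X)
    (p q : Ultrafilter ℕ) (hp : ∀ n : ℕ, p ≠ pure n) (hq : ∀ n : ℕ, q ≠ pure n)
    (hwp : ∀ D : Set ↥omegaStar, D.Countable → (⟨p, hp⟩ : ↥omegaStar) ∉ D →
      (⟨p, hp⟩ : ↥omegaStar) ∉ closure D)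
    (x : X) (d : ℕ → X) (hd_inj : Function.Injective d)
    (hd_disc : DiscreteTopology ↥(Set.range d))
    (e : ℕ → X)
    (hd_lim : Filter.Tendsto d ↑p (𝓝 x))
    (he_lim : Filter.Tendsto e ↑q (𝓝 x))
    (hne : {n : ℕ | e n = x} ∉ q) :
    ∃ g : ℕ → ℕ, Ultrafilter.map g q = p := by
  classical
  -- basic closure facts
  have hxA : ∀ A ∈ p, x ∈ closure (d '' A) := by
    intro A hA
    exact mem_closure_of_tendsto hd_lim
      (Filter.mem_of_superset hA (fun m hm => Set.mem_image_of_mem d hm))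
  have hxS : ∀ S ∈ q, x ∈ closure (e '' S) := by
    intro S hS
    exact mem_closure_of_tendsto he_lim
      (Filter.mem_of_superset hS (fun n hn => Set.mem_image_of_mem e hn))
  have hxcl : x ∈ closure (Set.range d) := by
    have := hxA Set.univ Filter.univ_mem
    rwa [Set.image_univ] at this
  have hN : {n : ℕ | e n = x}ᶜ ∈ q := Ultrafilter.compl_mem_iff_notMem.2 hne
  -- the final step, common to the two "constructive" cases
  have conclude : ∀ g : ℕ → ℕ, (∀ A ∈ p, g ⁻¹' A ∈ q) → Ultrafilter.map g q = p := by
    intro g key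
    apply Ultrafilter.coe_le_coe.1
    intro A hA
    rw [Ultrafilter.coe_map, Filter.mem_map]
    exact key A hA
  set T : Set ℕ := {n | e n ∈ Set.range d} with hT_def
  set Sc : Set ℕ := {n | e n ∈ closure (Set.range d) ∧ e n ∉ Set.range d ∧ e n ≠ x}
    with hSc_def
  set Sf : Set ℕ := {n | e n ∉ closure (Set.range d)} with hSf_def
  by_cases hT : T ∈ q
  · -- Case 1: `e n` lies in the range of `d` for `q`-many `n`.
    set g : ℕ → ℕ := fun n => if h : ∃ m, d m = e n then h.choose else 0 with hg_def
    have hg : ∀ n ∈ T, d (g n) = e n := by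
      intro n hn
      have h : ∃ m, d m = e n := hn
      simp only [hg_def, dif_pos h]
      exact h.choose_spec
    refine ⟨g, conclude g ?_⟩
    intro A hA
    by_contra hA'
    have hAc : (g ⁻¹' A)ᶜ ∈ q := Ultrafilter.compl_mem_iff_notMem.2 hA'
    have hS' : T ∩ (g ⁻¹' A)ᶜ ∈ q := Filter.inter_mem hT hAc
    have h1 : e '' (T ∩ (g ⁻¹' A)ᶜ) ⊆ d '' Aᶜ := by
      rintro y ⟨n, ⟨hnT, hnA⟩, rfl⟩
      exact ⟨g n, hnA, hg n hnT⟩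
    have h2 := aux_disj hX hd_inj hd_disc (disjoint_compl_right (a := A))
    have hx1 : x ∈ closure (d '' A) := hxA A hA
    have hx2 : x ∈ closure (d '' Aᶜ) :=
      closure_minimal (h1.trans subset_closure) isClosed_closure
        (hxS _ hS')
    rw [Set.eq_empty_iff_forall_notMem] at h2
    exact absurd ⟨hx1, hx2⟩ (h2 x)
  · by_cases hSc : Sc ∈ q
    · -- Case 2: `e n` lies in the closure of the range of `d`, outside it, for `q`-many `n`.
      -- This case is impossible, by the weak P-point property of `p`.
      exfalso
      have hu0 : ∀ n : ℕ, ∃ u : Ultrafilter ℕ, n ∈ Sc →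
          ∀ A : Set ℕ, A ∈ u ↔ e n ∈ closure (d '' A) := by
        intro n
        by_cases hn : n ∈ Sc
        · obtain ⟨u, hu⟩ := aux_ultra hX hd_inj hd_disc hn.1
          exact ⟨u, fun _ => hu⟩
        · exact ⟨p, fun h => absurd h hn⟩
      choose u hu using hu0
      -- each `u n` is nonprincipal
      have hnp : ∀ n ∈ Sc, ∀ k : ℕ, u n ≠ pure k := by
        intro n hn k hk
        have h1 : ({k} : Set ℕ) ∈ u n := by
          rw [hk]
          exact Ultrafilter.mem_pure.2 rfl
        rw [hu n hn] at h1
        rw [Set.image_singleton, closure_singleton] at h1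
        exact hn.2.1 (h1 ▸ Set.mem_range_self k)
      -- each `u n` is distinct from `p`
      have hnep : ∀ n ∈ Sc, u n ≠ p := by
        intro n hn heq
        obtain ⟨U, V, hUo, hVo, hxU, heV, hUV⟩ := t2_separation (Ne.symm hn.2.2)
        have hAp : d ⁻¹' U ∈ p := hd_lim (hUo.mem_nhds hxU)
        have hAu : d ⁻¹' U ∈ u n := heq ▸ hAp
        rw [hu n hn] at hAu
        have h1 : e n ∈ closure U :=
          closure_mono (Set.image_preimage_subset d U) hAu
        have h2 : Disjoint (closure U) V := hUV.closure_left hVo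
        exact Set.disjoint_left.1 h2 h1 heV
      -- the countable set of these ultrafilters in ω*
      set C : Set ↥omegaStar := Subtype.val ⁻¹' (u '' Sc) with hC_def
      have hCc : C.Countable :=
        ((Sc.to_countable).image u).preimage Subtype.val_injective
      have hpC : (⟨p, hp⟩ : ↥omegaStar) ∉ C := by
        rintro ⟨n, hn, hun⟩
        exact hnep n hn hun
      have hcl := hwp C hCc hpC
      rw [mem_closure_iff] at hcl
      push_neg at hcl
      obtain ⟨O, hOo, hpO, hOC⟩ := hcl
      rw [isOpen_induced_iff] at hOo
      obtain ⟨O', hO'o, rfl⟩ := hOo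
      have hpO' : (p : Ultrafilter ℕ) ∈ O' := hpO
      obtain ⟨s, hs, hps, hsO⟩ :=
        ultrafilterBasis_is_basis.exists_subset_of_mem_open hpO' hO'o
      obtain ⟨A, rfl⟩ := hs
      have hAp : A ∈ p := hps
      have hAu : ∀ n ∈ Sc, A ∉ u n := by
        intro n hn hAn
        have h1 : u n ∈ O' := hsO hAn
        have h2 : (⟨u n, hnp n hn⟩ : ↥omegaStar) ∈ Subtype.val ⁻¹' O' := h1
        have h3 : (⟨u n, hnp n hn⟩ : ↥omegaStar) ∈ C := ⟨n, hn, rfl⟩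
        rw [Set.eq_empty_iff_forall_notMem] at hOC
        exact hOC _ ⟨h2, h3⟩
      have h1 : e '' Sc ⊆ closure (d '' Aᶜ) := by
        rintro y ⟨n, hn, rfl⟩
        have : Aᶜ ∈ u n := Ultrafilter.compl_mem_iff_notMem.2 (hAu n hn)
        rw [hu n hn] at this
        exact this
      have hx2 : x ∈ closure (d '' Aᶜ) :=
        closure_minimal h1 isClosed_closure (hxS Sc hSc)
      have h2 := aux_disj hX hd_inj hd_disc (disjoint_compl_right (a := A))
      rw [Set.eq_empty_iff_forall_notMem] at h2
      exact h2 x ⟨hxA A hAp, hx2⟩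
    · -- Case 3: `e n` avoids the closure of the range of `d` for `q`-many `n`.
      have hSf : Sf ∈ q := by
        have hTc : Tᶜ ∈ q := Ultrafilter.compl_mem_iff_notMem.2 hT
        have hScc : Scᶜ ∈ q := Ultrafilter.compl_mem_iff_notMem.2 hSc
        have : {n : ℕ | e n = x}ᶜ ∩ (Tᶜ ∩ Scᶜ) ∈ q :=
          Filter.inter_mem hN (Filter.inter_mem hTc hScc)
        refine Filter.mem_of_superset this ?_
        rintro n ⟨hnx, hnT, hnSc⟩
        by_contra hcl
        exact hnSc ⟨not_not.1 hcl, hnT, hnx⟩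
      -- construct pairwise disjoint open neighborhoods of the `d a`'s
      have hV : ∀ a : ℕ, ∃ V : Set X, IsOpen V ∧ d a ∈ V ∧
          closure V ∩ Set.range d ⊆ {d a} := by
        intro a
        obtain ⟨U, hUo, hdU, hUiso⟩ := aux_isolated hd_disc a
        obtain ⟨t, ht, htc, hts⟩ := exists_mem_nhds_isClosed_subset (hUo.mem_nhds hdU)
        refine ⟨interior t, isOpen_interior, mem_interior_iff_mem_nhds.2 ht, ?_⟩
        intro y hy
        apply hUiso
        refine ⟨hts ?_, hy.2⟩
        have : closure (interior t) ⊆ t := by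
          calc closure (interior t) ⊆ closure t := closure_mono interior_subset
          _ = t := htc.closure_eq
        exact this hy.1
      choose V hVo hVmem hVcl using hV
      set W : ℕ → Set X := fun a => V a \ ⋃ j ∈ Finset.range a, closure (V j) with hW_def
      have hWsub : ∀ a, W a ⊆ V a := fun a => Set.diff_subset
      have hWo : ∀ a, IsOpen (W a) := by
        intro a
        exact (hVo a).sdiff ((Finset.range a).finite_toSet.isClosed_biUnion
          (fun j _ => isClosed_closure))
      have hWmem : ∀ a, d a ∈ W a := by
        intro a
        refine ⟨hVmem a, ?_⟩
        simp only [Set.mem_iUnion]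
        rintro ⟨j, hj, hdj⟩
        have : d a = d j := hVcl j ⟨hdj, Set.mem_range_self a⟩
        have : a = j := hd_inj this
        have hj' : j < a := Finset.mem_range.1 hj
        omega
      have hWdisj : ∀ a b, a ≠ b → ∀ y, y ∈ W a → y ∈ W b → False := by
        have key : ∀ a b, a < b → ∀ y, y ∈ W a → y ∈ W b → False := by
          intro a b hab y hya hyb
          apply hyb.2
          simp only [Set.mem_iUnion]
          exact ⟨a, Finset.mem_range.2 hab, subset_closure (hWsub a hya)⟩
        intro a b hab y hya hyb
        rcases lt_or_gt_of_ne hab with h | h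
        · exact key a b h y hya hyb
        · exact key b a h y hyb hya
      -- q-many `e n` fall into some `W a`
      have hSW : {n | ∃ a, e n ∈ W a} ∈ q := by
        by_contra h
        have hc : {n | ∃ a, e n ∈ W a}ᶜ ∈ q := Ultrafilter.compl_mem_iff_notMem.2 h
        have hS'' : Sf ∩ {n | ∃ a, e n ∈ W a}ᶜ ∈ q := Filter.inter_mem hSf hc
        set S'' := Sf ∩ {n | ∃ a, e n ∈ W a}ᶜ with hS''_def
        have hc1 : closure (Set.range d) ∩ (e '' S'') = ∅ := by
          rw [Set.eq_empty_iff_forall_notMem]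
          rintro y ⟨hy1, n, hn, rfl⟩
          exact hn.1 hy1
        have hc2 : Set.range d ∩ closure (e '' S'') = ∅ := by
          rw [Set.eq_empty_iff_forall_notMem]
          rintro y ⟨⟨a, rfl⟩, hy2⟩
          rw [mem_closure_iff] at hy2
          obtain ⟨z, hzW, n, hn, rfl⟩ := hy2 (W a) (hWo a) (hWmem a)
          exact hn.2 ⟨a, hzW⟩
        have := hX (Set.range d) (e '' S'') (Set.countable_range d)
          ((S''.to_countable).image e) hd_disc hc1 hc2
        rw [Set.eq_empty_iff_forall_notMem] at this
        exact this x ⟨hxcl, hxS S'' hS''⟩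
      set g : ℕ → ℕ := fun n => if h : ∃ a, e n ∈ W a then h.choose else 0 with hg_def
      have hg : ∀ n, (∃ a, e n ∈ W a) → e n ∈ W (g n) := by
        intro n h
        simp only [hg_def, dif_pos h]
        exact h.choose_spec
      refine ⟨g, conclude g ?_⟩
      intro A hA
      by_contra hA'
      have hAc : (g ⁻¹' A)ᶜ ∈ q := Ultrafilter.compl_mem_iff_notMem.2 hA'
      have hS' : Sf ∩ ({n | ∃ a, e n ∈ W a} ∩ (g ⁻¹' A)ᶜ) ∈ q :=
        Filter.inter_mem hSf (Filter.inter_mem hSW hAc)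
      set S' := Sf ∩ ({n | ∃ a, e n ∈ W a} ∩ (g ⁻¹' A)ᶜ) with hS'_def
      have hc1 : closure (d '' A) ∩ (e '' S') = ∅ := by
        rw [Set.eq_empty_iff_forall_notMem]
        rintro y ⟨hy1, n, hn, rfl⟩
        exact hn.1 (closure_mono (Set.image_subset_range d A) hy1)
      have hc2 : (d '' A) ∩ closure (e '' S') = ∅ := by
        rw [Set.eq_empty_iff_forall_notMem]
        rintro y ⟨⟨a, haA, rfl⟩, hy2⟩
        rw [mem_closure_iff] at hy2
        obtain ⟨z, hzW, n, hn, rfl⟩ := hy2 (W a) (hWo a) (hWmem a)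
        have hgn : e n ∈ W (g n) := hg n hn.2.1
        have hga : g n ≠ a := by
          intro h
          apply hn.2.2
          show g n ∈ A
          rw [h]
          exact haA
        exact hWdisj (g n) a hga (e n) hgn hzW
      have hdiscA : DiscreteTopology ↥(d '' A) :=
        DiscreteTopology.of_subset hd_disc (Set.image_subset_range d A)
      have := hX (d '' A) (e '' S') ((A.to_countable).image d)
        ((S'.to_countable).image e) hdiscA hc1 hc2
      rw [Set.eq_empty_iff_forall_notMem] at this
      exact this x ⟨hxA A hA, hxS S' hS'⟩
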